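/- Let X₁, …, Xₙ be independent random variables with values in a space 𝕏, and let Z = f(X₁,…,Xₙ) be square-integrable and satisfy the bounded differences property with constants c₁,…,cₙ: changing only the i-th coordinate changes f by at most c_i. Then Var(Z) ≤ (1/4)∑_{i=1}^n c_i². -/

import Mathlib

open MeasureTheory ProbabilityTheory

lemma bdva_integrable {α : Type*} [MeasurableSpace α] (μ : Measure α) [IsFiniteMeasure μ]
    {g : α → ℝ} (hg : Measurable g) {B : ℝ} (hB : ∀ x, |g x| ≤ B) : Integrable g μ :=
  ⟨hg.aestronglyMeasurable, HasFiniteIntegral.of_bounded (C := B)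
    (Filter.Eventually.of_forall (fun x => by simpa using hB x))⟩

lemma bdva_osc {𝕏 : Type*} {n : ℕ} (f : (Fin n → 𝕏) → ℝ) (c : Fin n → ℝ)
    (hbd : ∀ (x x' : Fin n → 𝕏) (i : Fin n),
      (∀ j, j ≠ i → x j = x' j) → |f x - f x'| ≤ c i) :
    ∀ x y : Fin n → 𝕏, |f x - f y| ≤ ∑ i, c i := by
  suffices h : ∀ (s : Finset (Fin n)) (x y : Fin n → 𝕏),
      (∀ j, j ∉ s → x j = y j) → |f x - f y| ≤ ∑ i ∈ s, c i by
    intro x y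
    exact h Finset.univ x y (fun j hj => absurd (Finset.mem_univ j) hj)
  intro s
  induction s using Finset.induction_on with
  | empty =>
    intro x y h
    have : x = y := funext fun j => h j (Finset.notMem_empty j)
    simp [this]
  | @insert a s ha ih =>
    intro x y h
    have hsum : ∑ i ∈ insert a s, c i = c a + ∑ i ∈ s, c i := Finset.sum_insert ha
    set z : Fin n → 𝕏 := Function.update x a (y a) with hz
    have h1 : |f x - f z| ≤ c a := by
      refine hbd x z a (fun j hj => ?_)
      simp [hz, Function.update_of_ne hj]
    have h2 : |f z - f y| ≤ ∑ i ∈ s, c i := by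
      refine ih z y (fun j hj => ?_)
      by_cases hja : j = a
      · subst hja; simp [hz]
      · have : j ∉ insert a s := by simp [hja, hj]
        simp [hz, Function.update_of_ne hja, h j this]
    calc |f x - f y| = |(f x - f z) + (f z - f y)| := by ring_nf
      _ ≤ |f x - f z| + |f z - f y| := abs_add_le _ _
      _ ≤ c a + ∑ i ∈ s, c i := add_le_add h1 h2
      _ = _ := hsum.symm

lemma bdva_popoviciu {α : Type*} [MeasurableSpace α] [Nonempty α] (μ : Measure α)
    [IsProbabilityMeasure μ] {g : α → ℝ} (hg : Measurable g) {c : ℝ}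
    (hosc : ∀ s t, |g s - g t| ≤ c) :
    (∫ x, g x ^ 2 ∂μ) - (∫ x, g x ∂μ) ^ 2 ≤ c ^ 2 / 4 := by
  obtain t₀ := Classical.arbitrary α
  have hbdB : ∀ x, |g x| ≤ |g t₀| + c := fun x => by
    have := hosc x t₀
    have h2 := abs_sub_abs_le_abs_sub (g x) (g t₀)
    linarith
  have hlb : BddBelow (Set.range g) := ⟨g t₀ - c, by
    rintro _ ⟨x, rfl⟩
    have := hosc t₀ x
    have := abs_le.1 this
    linarith [this.2]⟩
  set m := sInf (Set.range g) with hm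
  set a := m + c / 2 with hadef
  have hge : ∀ x, m ≤ g x := fun x => csInf_le hlb ⟨x, rfl⟩
  have hle : ∀ x, g x ≤ m + c := by
    intro x
    have : g x - c ≤ m := le_csInf (Set.range_nonempty g) (by
      rintro _ ⟨y, rfl⟩
      have := abs_le.1 (hosc x y)
      linarith [this.2])
    linarith
  have habs : ∀ x, |g x - a| ≤ c / 2 := fun x => abs_le.2 ⟨by have := hge x; simp [hadef]; linarith,
    by have := hle x; simp [hadef]; linarith⟩
  have hgint : Integrable g μ := bdva_integrable μ hg hbdB
  have hg2int : Integrable (fun x => g x ^ 2) μ := by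
    refine bdva_integrable μ (hg.pow_const 2) (B := (|g t₀| + c) ^ 2) (fun x => ?_)
    rw [abs_pow]
    exact pow_le_pow_left₀ (abs_nonneg _) (hbdB x) 2
  have key : ∫ x, (g x - a) ^ 2 ∂μ ≤ c ^ 2 / 4 := by
    have h1 : ∫ x, (g x - a) ^ 2 ∂μ ≤ ∫ _x, c ^ 2 / 4 ∂μ := by
      refine integral_mono ?_ (integrable_const _) (fun x => ?_)
      · refine bdva_integrable μ (((hg.sub measurable_const)).pow_const 2)
          (B := (c/2)^2) (fun x => ?_)
        rw [abs_pow]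
        exact pow_le_pow_left₀ (abs_nonneg _) (habs x) 2
      · have := habs x
        have h2 : (g x - a) ^ 2 ≤ (c/2) ^ 2 := by
          rw [← sq_abs]
          exact pow_le_pow_left₀ (abs_nonneg _) this 2
        nlinarith
    simpa using h1
  have hexp : ∫ x, (g x - a) ^ 2 ∂μ
      = (∫ x, g x ^ 2 ∂μ) - 2 * a * (∫ x, g x ∂μ) + a ^ 2 := by
    have : ∀ x, (g x - a) ^ 2 = g x ^ 2 - 2 * a * g x + a ^ 2 := fun x => by ring
    simp_rw [this]
    have hmul : Integrable (fun x => 2 * a * g x) μ := hgint.const_mul (2*a)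
    have hsub : Integrable (fun x => g x ^ 2 - 2 * a * g x) μ := hg2int.sub hmul
    rw [integral_add hsub (integrable_const _),
      integral_sub hg2int hmul, MeasureTheory.integral_const_mul]
    simp
  nlinarith [key, hexp, sq_nonneg ((∫ x, g x ∂μ) - a)]


lemma bdva_abs_int {α : Type*} [MeasurableSpace α] (μ : Measure α) (h : α → ℝ) :
    |∫ x, h x ∂μ| ≤ ∫ x, |h x| ∂μ := by
  simpa [Real.norm_eq_abs] using norm_integral_le_integral_norm (μ := μ) h


lemma bdva_core {𝕏 : Type*} [MeasurableSpace 𝕏] :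
    ∀ (n : ℕ) (μ : Fin n → Measure 𝕏), (∀ i, IsProbabilityMeasure (μ i)) →
    ∀ (f : (Fin n → 𝕏) → ℝ), Measurable f → ∀ (c : Fin n → ℝ),
    (∀ (x x' : Fin n → 𝕏) (i : Fin n), (∀ j, j ≠ i → x j = x' j) → |f x - f x'| ≤ c i) →
    ∀ (B : ℝ), (∀ x, |f x| ≤ B) →
    (∫ x, f x ^ 2 ∂Measure.pi μ) - (∫ x, f x ∂Measure.pi μ) ^ 2 ≤ (1/4) * ∑ i, c i ^ 2 := by
  intro n
  induction n with
  | zero =>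
    intro μ hμ f hf c hbd B hB
    haveI := hμ
    haveI : IsProbabilityMeasure (Measure.pi μ) := inferInstance
    have hfc : f = fun _ => f default := funext fun x => by
      congr 1; exact Subsingleton.elim _ _
    rw [hfc]
    simp
  | succ n IH =>
    intro μ hμ f hf c hbd B hB
    haveI := hμ
    haveI : Nonempty 𝕏 := by
      by_contra h
      rw [not_nonempty_iff] at h
      have h1 : (μ 0) Set.univ = 1 := measure_univ
      rw [Set.univ_eq_empty_iff.mpr h, measure_empty] at h1
      exact zero_ne_one h1
    have hB0 : (0 : ℝ) ≤ B := le_trans (abs_nonneg _) (hB Classical.ofNonempty)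
    set ν : Fin n → Measure 𝕏 := fun j => μ ((0 : Fin (n+1)).succAbove j) with hν
    haveI hνp : ∀ j, IsProbabilityMeasure (ν j) := fun j => hμ _
    set e := MeasurableEquiv.piFinSuccAbove (fun _ : Fin (n+1) => 𝕏) 0 with he
    have mp : MeasurePreserving e (Measure.pi μ) ((μ 0).prod (Measure.pi ν)) :=
      measurePreserving_piFinSuccAbove μ 0
    set g : 𝕏 × (Fin n → 𝕏) → ℝ := fun p => f (e.symm p) with hgdef
    have hgmeas : Measurable g := hf.comp e.symm.measurable
    have hg_apply : ∀ t y, g (t, y) = f (Fin.insertNth 0 t y) := fun t y => rfl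
    have hgbd : ∀ p, |g p| ≤ B := fun p => hB _
    -- transfer integrals
    have hI1 : ∫ x, f x ∂Measure.pi μ = ∫ p, g p ∂((μ 0).prod (Measure.pi ν)) := by
      rw [← mp.integral_comp e.measurableEmbedding g]
      congr 1; funext x; simp [hgdef]
    have hI2 : ∫ x, f x ^ 2 ∂Measure.pi μ
        = ∫ p, g p ^ 2 ∂((μ 0).prod (Measure.pi ν)) := by
      rw [← mp.integral_comp e.measurableEmbedding (fun p => g p ^ 2)]
      congr 1; funext x; simp [hgdef]
    -- integrability on the product
    have hgint : Integrable g ((μ 0).prod (Measure.pi ν)) := bdva_integrable _ hgmeas hgbd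
    have hg2bd : ∀ p, |g p ^ 2| ≤ B ^ 2 := fun p => by
      rw [abs_pow]
      exact pow_le_pow_left₀ (abs_nonneg _) (hgbd p) 2
    have hg2int : Integrable (fun p => g p ^ 2) ((μ 0).prod (Measure.pi ν)) :=
      bdva_integrable _ (hgmeas.pow_const 2) hg2bd
    -- conditional expectation / conditional second moment
    set F : (Fin n → 𝕏) → ℝ := fun y => ∫ t, g (t, y) ∂(μ 0) with hF
    set G : (Fin n → 𝕏) → ℝ := fun y => ∫ t, g (t, y) ^ 2 ∂(μ 0) with hG
    have hFmeas : Measurable F :=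
      (hgmeas.stronglyMeasurable.integral_prod_left' (μ := μ 0)).measurable
    have hGmeas : Measurable G :=
      ((hgmeas.pow_const 2).stronglyMeasurable.integral_prod_left' (μ := μ 0)).measurable
    have hgy_meas : ∀ y, Measurable fun t => g (t, y) :=
      fun y => hgmeas.comp (measurable_id.prodMk measurable_const)
    have hgy_int : ∀ y, Integrable (fun t => g (t, y)) (μ 0) :=
      fun y => bdva_integrable _ (hgy_meas y) (fun t => hgbd _)
    have hFbd : ∀ y, |F y| ≤ B := fun y => by
      calc |F y| ≤ ∫ t, |g (t, y)| ∂(μ 0) := by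
            rw [hF]; exact bdva_abs_int _ _
        _ ≤ ∫ _t, B ∂(μ 0) := integral_mono (hgy_int y).abs (integrable_const _)
            (fun t => hgbd _)
        _ = B := by simp
    have hGbd : ∀ y, |G y| ≤ B ^ 2 := fun y => by
      calc |G y| ≤ ∫ t, |g (t, y) ^ 2| ∂(μ 0) := by
            rw [hG]; exact bdva_abs_int _ _
        _ ≤ ∫ _t, B ^ 2 ∂(μ 0) := integral_mono
            (bdva_integrable _ ((hgy_meas y).pow_const 2) (fun t => hg2bd _)).abs
            (integrable_const _) (fun t => hg2bd _)
        _ = B ^ 2 := by simp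
    -- Fubini
    have hFub1 : ∫ p, g p ∂((μ 0).prod (Measure.pi ν)) = ∫ y, F y ∂(Measure.pi ν) :=
      integral_prod_symm g hgint
    have hFub2 : ∫ p, g p ^ 2 ∂((μ 0).prod (Measure.pi ν)) = ∫ y, G y ∂(Measure.pi ν) :=
      integral_prod_symm _ hg2int
    -- pointwise conditional variance bound
    have hinner : ∀ y, G y - F y ^ 2 ≤ c 0 ^ 2 / 4 := fun y => by
      refine bdva_popoviciu (μ 0) (hgy_meas y) (c := c 0) (fun s t => ?_)
      rw [hg_apply, hg_apply]
      refine hbd _ _ 0 (fun j hj => ?_)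
      obtain ⟨k, rfl⟩ := Fin.exists_succAbove_eq hj
      simp [Fin.insertNth_apply_succAbove]
    -- bounded differences for F
    have hFbdiff : ∀ (y y' : Fin n → 𝕏) (j : Fin n), (∀ k, k ≠ j → y k = y' k) →
        |F y - F y'| ≤ (fun j => c ((0 : Fin (n+1)).succAbove j)) j := by
      intro y y' j hk
      have hptw : ∀ t, |g (t, y) - g (t, y')| ≤ c ((0 : Fin (n+1)).succAbove j) := fun t => by
        rw [hg_apply, hg_apply]
        refine hbd _ _ _ (fun l hl => ?_)
        rcases eq_or_ne l 0 with rfl | hl0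
        · simp
        · obtain ⟨m, rfl⟩ := Fin.exists_succAbove_eq hl0
          have hmj : m ≠ j := fun h => hl (by rw [h])
          simp [Fin.insertNth_apply_succAbove, hk m hmj]
      have h1 : F y - F y' = ∫ t, (g (t, y) - g (t, y')) ∂(μ 0) :=
        (integral_sub (hgy_int y) (hgy_int y')).symm
      rw [h1]
      calc |∫ t, (g (t, y) - g (t, y')) ∂(μ 0)|
          ≤ ∫ t, |g (t, y) - g (t, y')| ∂(μ 0) := bdva_abs_int _ _
        _ ≤ ∫ _t, c ((0 : Fin (n+1)).succAbove j) ∂(μ 0) := integral_mono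
            ((hgy_int y).sub (hgy_int y')).abs (integrable_const _) hptw
        _ = _ := by simp
    -- integrability of F, G on pi ν
    have hFint : Integrable F (Measure.pi ν) := bdva_integrable _ hFmeas hFbd
    have hF2int : Integrable (fun y => F y ^ 2) (Measure.pi ν) :=
      bdva_integrable _ (hFmeas.pow_const 2) (B := B ^ 2) (fun y => by
        rw [abs_pow]; exact pow_le_pow_left₀ (abs_nonneg _) (hFbd y) 2)
    have hGint : Integrable G (Measure.pi ν) := bdva_integrable _ hGmeas hGbd
    -- step 1 : averaged conditional variance
    have step1 : ∫ y, (G y - F y ^ 2) ∂(Measure.pi ν) ≤ c 0 ^ 2 / 4 := by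
      calc ∫ y, (G y - F y ^ 2) ∂(Measure.pi ν)
          ≤ ∫ _y, c 0 ^ 2 / 4 ∂(Measure.pi ν) :=
            integral_mono (hGint.sub hF2int) (integrable_const _) hinner
        _ = c 0 ^ 2 / 4 := by simp
    -- step 2 : induction hypothesis on F
    have step2 : (∫ y, F y ^ 2 ∂(Measure.pi ν)) - (∫ y, F y ∂(Measure.pi ν)) ^ 2
        ≤ (1/4) * ∑ j, c ((0 : Fin (n+1)).succAbove j) ^ 2 :=
      IH ν hνp F hFmeas _ hFbdiff B hFbd
    have hsplit : ∫ y, (G y - F y ^ 2) ∂(Measure.pi ν)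
        = (∫ y, G y ∂(Measure.pi ν)) - ∫ y, F y ^ 2 ∂(Measure.pi ν) :=
      integral_sub hGint hF2int
    have hsum : ∑ i : Fin (n+1), c i ^ 2
        = c 0 ^ 2 + ∑ j, c ((0 : Fin (n+1)).succAbove j) ^ 2 :=
      Fin.sum_univ_succAbove (fun i => c i ^ 2) 0
    rw [hI1, hI2, hFub1, hFub2, hsum]
    linarith


open MeasureTheory ProbabilityTheory in
theorem bounded_differences_variance_bound
    {Ω 𝕏 : Type*} [MeasureSpace Ω] [IsProbabilityMeasure (volume : Measure Ω)]
    [MeasurableSpace 𝕏] (n : ℕ) (X : Fin n → Ω → 𝕏)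
    (hXmeas : ∀ i, Measurable (X i))
    (hindep : iIndepFun X volume)
    (f : (Fin n → 𝕏) → ℝ) (hfmeas : Measurable f)
    (c : Fin n → ℝ)
    (hbd : ∀ (x x' : Fin n → 𝕏) (i : Fin n),
      (∀ j, j ≠ i → x j = x' j) → |f x - f x'| ≤ c i)
    (hZ : MemLp (fun ω => f (fun i => X i ω)) 2 volume) :
    variance (fun ω => f (fun i => X i ω)) volume ≤ (1 / 4) * ∑ i, (c i) ^ 2 := by
  haveI : Nonempty Ω := by
    by_contra h
    rw [not_nonempty_iff] at h
    have h1 : (volume : Measure Ω) Set.univ = 1 := measure_univ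
    rw [Set.univ_eq_empty_iff.mpr h, measure_empty] at h1
    exact zero_ne_one h1
  set T : Ω → (Fin n → 𝕏) := fun ω i => X i ω with hT
  have hTmeas : Measurable T := measurable_pi_lambda _ hXmeas
  set μi : Fin n → Measure 𝕏 := fun i => Measure.map (X i) volume with hμi
  haveI : ∀ i, IsProbabilityMeasure (μi i) :=
    fun i => Measure.isProbabilityMeasure_map (hXmeas i).aemeasurable
  -- joint law is the product measure
  have hmap : Measure.map T volume = Measure.pi μi := by
    refine (Measure.pi_eq fun s hs => ?_).symm
    rw [Measure.map_apply hTmeas (MeasurableSet.univ_pi hs)]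
    have hpre : T ⁻¹' Set.pi Set.univ s = ⋂ i ∈ Finset.univ, X i ⁻¹' s i := by
      ext ω; simp [hT, Set.mem_pi]
    rw [hpre, hindep.measure_inter_preimage_eq_mul Finset.univ (fun i _ => hs i)]
    refine Finset.prod_congr rfl (fun i _ => ?_)
    rw [hμi]
    exact (Measure.map_apply (hXmeas i) (hs i)).symm
  -- boundedness
  obtain ω₀ := Classical.arbitrary Ω
  set x₀ : Fin n → 𝕏 := fun i => X i ω₀ with hx₀
  have hBbd : ∀ x, |f x| ≤ |f x₀| + ∑ i, c i := fun x => by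
    have h1 := bdva_osc f c hbd x x₀
    have h2 := abs_sub_abs_le_abs_sub (f x) (f x₀)
    linarith
  have hvar : variance (fun ω => f (fun i => X i ω)) volume
      = (∫ x, f x ^ 2 ∂Measure.pi μi) - (∫ x, f x ∂Measure.pi μi) ^ 2 := by
    have e1 : ∫ ω, f (T ω) ∂(volume : Measure Ω) = ∫ x, f x ∂Measure.pi μi := by
      rw [← hmap, integral_map hTmeas.aemeasurable hfmeas.aestronglyMeasurable]
    have e2 : ∫ ω, f (T ω) ^ 2 ∂(volume : Measure Ω) = ∫ x, f x ^ 2 ∂Measure.pi μi := by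
      rw [← hmap, integral_map hTmeas.aemeasurable
        ((hfmeas.pow_const 2).aestronglyMeasurable)]
    rw [variance_eq_sub hZ]
    simp only [Pi.pow_apply]
    rw [← e1, ← e2]
  rw [hvar]
  exact bdva_core n μi (fun i => inferInstance) f hfmeas c hbd _ hBbd
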